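/- If a derivation of an attributed tree transducer on input s contains a productive cycle — i.e., there are indices i < j with t_i ≠ t_j and an attribute occurrence α(ν) occurring in both t_i and t_j, where t_j is obtained from t_i by rewriting only at positions below the occurrence of α(ν) and the rewriting strictly grows the tree — then by pumping, the transducer produces infinitely many distinct output trees on input s; hence a functional attributed tree transducer admits no productive cycles on inputs in its domain. -/

import Mathlib

universe u

inductive RTree (α : Type u) : Type u
  | node : α → List (RTree α) → RTree α

namespace RTree

theorem sizeOf_lt_of_mem {α : Type u} [SizeOf α] {t : RTree α} {ts : List (RTree α)}
    (h : t ∈ ts) : sizeOf t < 1 + sizeOf ts := by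
  have := List.sizeOf_lt_of_mem h
  omega

def size {α : Type u} : RTree α → ℕ
  | .node _ ts => 1 + (ts.attach.map (fun x => size x.1)).sum
decreasing_by
  simp only [node.sizeOf_spec]
  have := List.sizeOf_lt_of_mem x.2
  omega

def height {α : Type u} : RTree α → ℕ
  | .node _ ts => (ts.attach.map (fun x => height x.1 + 1)).foldr max 0
decreasing_by
  simp only [node.sizeOf_spec]
  have := List.sizeOf_lt_of_mem x.2
  omega

def rootLabel {α : Type u} : RTree α → α
  | .node a _ => a

def tmap {α β : Type u} (f : α → β) : RTree α → RTree β
  | .node a ts => .node (f a) (ts.attach.map (fun x => tmap f x.1))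
decreasing_by
  simp only [node.sizeOf_spec]
  have := List.sizeOf_lt_of_mem x.2
  omega

def subtreeAt {α : Type u} : RTree α → List ℕ → Option (RTree α)
  | t, [] => some t
  | .node _ ts, i :: u =>
    match ts[i - 1]? with
    | some t' => if 1 ≤ i then subtreeAt t' u else none
    | none => none

def replaceAt {α : Type u} : RTree α → List ℕ → RTree α → RTree α
  | _, [], t' => t'
  | .node a ts, i :: u, t' =>
      .node a (ts.set (i - 1)
        (match ts[i - 1]? with
         | some ti => replaceAt ti u t'
         | none => .node a []))

def nodesList {α : Type u} : RTree α → List (List ℕ)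
  | .node _ ts =>
      [] :: (((ts.attach.map (fun x => nodesList x.1)).zipIdx.map (fun q => (q.2, q.1))).flatMap
        fun p => p.2.map fun u => (p.1 + 1) :: u)
decreasing_by
  simp only [node.sizeOf_spec]
  have := List.sizeOf_lt_of_mem x.2
  omega

def nodeSet {α : Type u} (t : RTree α) : Set (List ℕ) := {v | (t.subtreeAt v).isSome}

inductive WellRanked {α : Type u} (rank : α → ℕ) : RTree α → Prop
  | node (a : α) (ts : List (RTree α)) :
      ts.length = rank a → (∀ t ∈ ts, WellRanked rank t) → WellRanked rank (.node a ts)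

inductive Monadic {α : Type u} : RTree α → Prop
  | node (a : α) (ts : List (RTree α)) :
      ts.length ≤ 1 → (∀ t ∈ ts, Monadic t) → Monadic (.node a ts)

end RTree
open RTree in
/-- Right-hand sides of rules: trees over output symbols `Δ` with leaves of the form
`a'(π i)` (coded `Sum.inr (Sum.inl (a', i))`) or `b'(π)` (coded `Sum.inr (Sum.inr b')`). -/
abbrev RHS (S I Δ : Type) := RTree (Δ ⊕ (S × ℕ ⊕ I))

/-- Sentential forms: trees over `Δ` with leaves labelled by attribute occurrences `α(v)`. -/
abbrev SForm (S I Δ : Type) := RTree (Δ ⊕ ((S ⊕ I) × List ℕ))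

/-- An attributed tree transducer with synthesized attributes `S`, inherited attributes `I`,
input alphabet `Sg`, output alphabet `Δ`, initial attribute `init` and rule sets; `rootI`
are the rules for the root marker `#` (which has only inherited rules `b(π1) → ξ`). -/
structure ATT (S I Sg Δ : Type) where
  init : S
  ruleS : Sg → S → Set (RHS S I Δ)
  ruleI : Sg → I → ℕ → Set (RHS S I Δ)
  rootI : I → Set (RHS S I Δ)

namespace ATT

variable {S I Sg Δ : Type}

/-- The labelling function of `#(s)`: the root `[]` is labelled by `#` (coded `none`),
and the node `1·v` is labelled by the label of `v` in `s`. -/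
def labelHash (s : RTree Sg) : List ℕ → Option (Option Sg)
  | [] => some none
  | i :: v => if i = 1 then (s.subtreeAt v).map (fun t => some t.rootLabel) else none

/-- The labelling function of plain `s` (no root marker). -/
def labelPlain (s : RTree Sg) : List ℕ → Option (Option Sg) :=
  fun v => (s.subtreeAt v).map (fun t => some t.rootLabel)

/-- Right-hand sides for a synthesized attribute at a symbol (`none` codes `#`,
which has no synthesized rules). -/
def rhsS (A : ATT S I Sg Δ) : Option Sg → S → Set (RHS S I Δ)
  | none, _ => ∅
  | some σ, a => A.ruleS σ a

/-- Right-hand sides for an inherited attribute `b(π i)` at a symbol. -/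
def rhsI (A : ATT S I Sg Δ) : Option Sg → I → ℕ → Set (RHS S I Δ)
  | none, b, i => if i = 1 then A.rootI b else ∅
  | some σ, b, i => A.ruleI σ b i

/-- Instantiation `ξ[π ← v]` of a right-hand side at node `v`. -/
def inst (v : List ℕ) (ξ : RHS S I Δ) : SForm S I Δ :=
  ξ.tmap (fun l => match l with
    | Sum.inl d => Sum.inl d
    | Sum.inr (Sum.inl (a, i)) => Sum.inr (Sum.inl a, v ++ [i])
    | Sum.inr (Sum.inr b) => Sum.inr (Sum.inr b, v))

/-- `t` has at position `p` a leaf labelled by the attribute occurrence `γ(v)`. -/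
def IsAttLeaf (t : SForm S I Δ) (p : List ℕ) (γ : S ⊕ I) (v : List ℕ) : Prop :=
  t.subtreeAt p = some (.node (Sum.inr (γ, v)) [])

/-- The attribute occurrence `γ(v)` occurs in `t`. -/
def Occurs (t : SForm S I Δ) (γ : S ⊕ I) (v : List ℕ) : Prop :=
  ∃ p, IsAttLeaf t p γ v

/-- One derivation step w.r.t. a labelling function `lab`: a leaf labelled `γ(v·i)`
(`i = 0` for synthesized, `i > 0` for inherited attributes) is replaced by an
instantiated right-hand side. -/
def StepL (A : ATT S I Sg Δ) (lab : List ℕ → Option (Option Sg))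
    (t t' : SForm S I Δ) : Prop :=
  ∃ p γ v ξ, IsAttLeaf t p γ v ∧
    ((∃ a l, γ = Sum.inl a ∧ lab v = some l ∧ ξ ∈ A.rhsS l a) ∨
     (∃ b w i l, γ = Sum.inr b ∧ v = w ++ [i] ∧ 1 ≤ i ∧ lab w = some l ∧ ξ ∈ A.rhsI l b i)) ∧
    t' = t.replaceAt p (inst v ξ)

/-- The derivation relation `⇒_{A, #(s)}`. -/
def Step (A : ATT S I Sg Δ) (s : RTree Sg) : SForm S I Δ → SForm S I Δ → Prop :=
  StepL A (labelHash s)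

/-- The derivation relation `⇒_{A, s}` (without root marker). -/
def StepPlain (A : ATT S I Sg Δ) (s : RTree Sg) : SForm S I Δ → SForm S I Δ → Prop :=
  StepL A (labelPlain s)

/-- The sentential form consisting of the single attribute occurrence `γ(v)`. -/
def attForm (γ : S ⊕ I) (v : List ℕ) : SForm S I Δ := .node (Sum.inr (γ, v)) []

/-- The initial sentential form `a₀(1)`. -/
def initForm (A : ATT S I Sg Δ) : SForm S I Δ := attForm (Sum.inl A.init) [1]

/-- Embedding of output trees into sentential forms. -/
def out (t : RTree Δ) : SForm S I Δ := t.tmap Sum.inl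

/-- The translation realized by `A`:
`{(s,t) | a₀(1) ⇒*_{A,#(s)} t}`. -/
def trans (A : ATT S I Sg Δ) : Set (RTree Sg × RTree Δ) :=
  {p | Relation.ReflTransGen (Step A p.1) (initForm A) (out p.2)}

/-- `A` is deterministic: at most one rule per left-hand side. -/
def Deterministic (A : ATT S I Sg Δ) : Prop :=
  (∀ σ a, (A.ruleS σ a).Subsingleton) ∧ (∀ σ b i, (A.ruleI σ b i).Subsingleton) ∧
    (∀ b, (A.rootI b).Subsingleton)

/-- `A` is functional: its translation is a partial function. -/
def Functional (A : ATT S I Sg Δ) : Prop :=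
  ∀ s t₁ t₂, (s, t₁) ∈ A.trans → (s, t₂) ∈ A.trans → t₁ = t₂

/-- `A` has monadic output: every right-hand side is a monadic tree
(all output symbols have rank at most 1). -/
def MonadicOutput (A : ATT S I Sg Δ) : Prop :=
  (∀ σ a ξ, ξ ∈ A.ruleS σ a → RTree.Monadic ξ) ∧
  (∀ σ b i ξ, ξ ∈ A.ruleI σ b i → RTree.Monadic ξ) ∧
  (∀ b ξ, ξ ∈ A.rootI b → RTree.Monadic ξ)

/-- Attribute `a` processes node `v` of the input tree `s`:
some tree derivable from `a₀(1)` contains an occurrence `a(1·v)`. -/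
def Processes (A : ATT S I Sg Δ) (s : RTree Sg) (a : S) (v : List ℕ) : Prop :=
  ∃ t, Relation.ReflTransGen (Step A s) (initForm A) t ∧ Occurs t (Sum.inl a) (1 :: v)

/-- The is-dependency of `s`:
`ISD_A(s) = {(b,a) | a(ε) ⇒*_{A,s} t' and b(ε) occurs in t'}`. -/
def ISD (A : ATT S I Sg Δ) (s : RTree Sg) : Set (I × S) :=
  {q | ∃ t', Relation.ReflTransGen (StepPlain A s) (attForm (Sum.inl q.2) []) t' ∧
        Occurs t' (Sum.inr q.1) []}

/-- The visiting pair set at node `v` of `s`, where `sv = s/v`. -/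
def VisitSet (A : ATT S I Sg Δ) (s sv : RTree Sg) (v : List ℕ) : Set (I × S) :=
  {q | q ∈ A.ISD sv ∧ A.Processes s q.2 v}

/-- `Ω_ψ`: all trees whose is-dependency contains `ψ`. -/
def Omega (A : ATT S I Sg Δ) (ψ : Set (I × S)) : Set (RTree Sg) :=
  {s' | ψ ⊆ A.ISD s'}

/-- `t` is the normal form of `t₀` w.r.t. `⇒_{A,s}` (no root marker). -/
def IsNF (A : ATT S I Sg Δ) (s : RTree Sg) (t₀ t : SForm S I Δ) : Prop :=
  Relation.ReflTransGen (StepPlain A s) t₀ t ∧ ∀ u, ¬ StepPlain A s t u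

/-- `A` is circular: for some input `s`, some attribute occurrence `α(v)` in `#(s)` rewrites
in one or more steps to a tree containing `α(v)` again. -/
def Circular (A : ATT S I Sg Δ) : Prop :=
  ∃ (s : RTree Sg) (γ : S ⊕ I) (v : List ℕ) (t : SForm S I Δ),
    (labelHash s v).isSome ∧ Relation.TransGen (Step A s) (attForm γ v) t ∧ Occurs t γ v

/-- A derivation of `A` on input `s`: a nonempty sequence of sentential forms starting
with `a₀(1)` and chained by `⇒_{A,#(s)}`. -/
def IsDeriv (A : ATT S I Sg Δ) (s : RTree Sg) (ts : List (SForm S I Δ)) : Prop :=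
  ts.head? = some (initForm A) ∧ ts.Chain' (Step A s)

end ATT


namespace PumpAux
open RTree

variable {α β : Type u}

theorem size_node (a : α) (ts : List (RTree α)) :
    size (RTree.node a ts) = 1 + (ts.map size).sum := by
  rw [size]
  congr 1
  congr 1
  simp

theorem size_pos (t : RTree α) : 0 < t.size := by
  cases t with
  | node a ts => rw [size_node]; omega

theorem subtreeAt_nil (t : RTree α) : t.subtreeAt [] = some t := by rw [RTree.subtreeAt]

theorem replaceAt_nil (t x : RTree α) : t.replaceAt [] x = x := by
  rw [RTree.replaceAt]

theorem subtreeAt_cons (a : α) (ts : List (RTree α)) (i : ℕ) (u : List ℕ) :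
    (RTree.node a ts).subtreeAt (i :: u) =
      match ts[i - 1]? with
      | some t' => if 1 ≤ i then t'.subtreeAt u else none
      | none => none := rfl

theorem replaceAt_cons (a : α) (ts : List (RTree α)) (i : ℕ) (u : List ℕ) (x : RTree α) :
    (RTree.node a ts).replaceAt (i :: u) x =
      .node a (ts.set (i - 1)
        (match ts[i - 1]? with
         | some ti => ti.replaceAt u x
         | none => .node a [])) := rfl

theorem subtreeAt_cons_eq_some {a : α} {ts : List (RTree α)} {i : ℕ} {u : List ℕ}
    {w : RTree α} (h : (RTree.node a ts).subtreeAt (i :: u) = some w) :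
    ∃ w0, ts[i - 1]? = some w0 ∧ 1 ≤ i ∧ w0.subtreeAt u = some w := by
  rw [subtreeAt_cons] at h
  cases hg : ts[i - 1]? with
  | none => simp only [hg] at h; cases h
  | some w0 =>
    simp only [hg] at h
    by_cases hi : 1 ≤ i
    · rw [if_pos hi] at h; exact ⟨w0, rfl, hi, h⟩
    · rw [if_neg hi] at h; simp at h

theorem subtreeAt_cons_isSome {a : α} {ts : List (RTree α)} {i : ℕ} {u : List ℕ}
    (h : ((RTree.node a ts).subtreeAt (i :: u)).isSome) :
    ∃ w0, ts[i - 1]? = some w0 ∧ 1 ≤ i ∧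
      (RTree.node a ts).subtreeAt (i :: u) = w0.subtreeAt u := by
  obtain ⟨w, hw⟩ := Option.isSome_iff_exists.mp h
  obtain ⟨w0, hg, hi, hsub⟩ := subtreeAt_cons_eq_some hw
  exact ⟨w0, hg, hi, by simp only [subtreeAt_cons, hg, if_pos hi]⟩

theorem subtreeAt_append (r r' : List ℕ) (t : RTree α) :
    t.subtreeAt (r ++ r') = (t.subtreeAt r).bind (fun x => x.subtreeAt r') := by
  induction r generalizing t with
  | nil => simp [subtreeAt_nil]
  | cons i r ih =>
    cases t with
    | node a ts =>
      rw [List.cons_append, subtreeAt_cons, subtreeAt_cons]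
      cases hg : ts[i - 1]? with
      | none => simp
      | some w =>
        by_cases hi : 1 ≤ i
        · simp only [if_pos hi]; exact ih w
        · simp [hi]

theorem list_get?_set_eq {l : List (RTree α)} {n : ℕ} {w : RTree α}
    (h : l[n]? = some w) (y : RTree α) : (l.set n y)[n]? = some y := by
  have hl : n < l.length := (List.getElem?_eq_some_iff.mp h).1
  exact List.getElem?_set_self hl

theorem subtreeAt_replaceAt (r : List ℕ) (t x : RTree α) (h : (t.subtreeAt r).isSome) :
    (t.replaceAt r x).subtreeAt r = some x := by
  induction r generalizing t with
  | nil => rw [replaceAt_nil, subtreeAt_nil]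
  | cons i r ih =>
    cases t with
    | node a ts =>
      obtain ⟨w0, hg, hi, he⟩ := subtreeAt_cons_isSome h
      simp only [replaceAt_cons, hg, subtreeAt_cons, list_get?_set_eq hg, if_pos hi]
      exact ih w0 (by rw [he] at h; exact h)

theorem subtreeAt_replaceAt_of_ne (r r' : List ℕ) (hrr' : ¬ r <+: r') (hr'r : ¬ r' <+: r)
    (t x : RTree α) (h : (t.subtreeAt r).isSome) (h' : (t.subtreeAt r').isSome) :
    (t.replaceAt r x).subtreeAt r' = t.subtreeAt r' := by
  induction r generalizing r' t with
  | nil => exact absurd List.nil_prefix hrr'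
  | cons i r ih =>
    cases r' with
    | nil => exact absurd List.nil_prefix hr'r
    | cons j r' =>
      cases t with
      | node a ts =>
        obtain ⟨w0, hg, hi, he⟩ := subtreeAt_cons_isSome h
        obtain ⟨w0', hg', hj, he'⟩ := subtreeAt_cons_isSome h'
        by_cases hij : i = j
        · subst hij
          have hww : w0' = w0 := by rw [hg] at hg'; exact (Option.some.inj hg').symm
          have he'' : (RTree.node a ts).subtreeAt (i :: r') = w0.subtreeAt r' := by
            rw [he', hww]
          have hr1 : ¬ r <+: r' := fun hc => hrr' (by simpa using hc)
          have hr2 : ¬ r' <+: r := fun hc => hr'r (by simpa using hc)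
          simp only [replaceAt_cons, hg, subtreeAt_cons, list_get?_set_eq hg, if_pos hi]
          rw [ih r' hr1 hr2 w0 (by rw [he] at h; exact h) (by rw [he''] at h'; exact h')]
        · have hne : i - 1 ≠ j - 1 := by omega
          simp only [replaceAt_cons, hg, subtreeAt_cons, List.getElem?_set_ne hne]

theorem replaceAt_append (r ρ : List ℕ) (t x : RTree α) {w : RTree α}
    (h : t.subtreeAt r = some w) :
    t.replaceAt (r ++ ρ) x = t.replaceAt r (w.replaceAt ρ x) := by
  induction r generalizing t with
  | nil =>
    rw [subtreeAt_nil] at h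
    rw [← Option.some.inj h, List.nil_append, replaceAt_nil]
  | cons i r ih =>
    cases t with
    | node a ts =>
      obtain ⟨w0, hg, hi, hsub⟩ := subtreeAt_cons_eq_some h
      rw [List.cons_append]
      simp only [replaceAt_cons, hg]
      rw [ih w0 hsub]

theorem replaceAt_replaceAt (r : List ℕ) (t x y : RTree α) (h : (t.subtreeAt r).isSome) :
    (t.replaceAt r x).replaceAt r y = t.replaceAt r y := by
  induction r generalizing t with
  | nil => rw [replaceAt_nil, replaceAt_nil]
  | cons i r ih =>
    cases t with
    | node a ts =>
      obtain ⟨w0, hg, hi, he⟩ := subtreeAt_cons_isSome h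
      simp only [replaceAt_cons, hg, list_get?_set_eq hg, List.set_set]
      rw [ih w0 (by rw [he] at h; exact h)]

theorem list_set_self : ∀ (l : List (RTree α)) (n : ℕ) (w : RTree α),
    l[n]? = some w → l.set n w = l
  | [], _, _, h => by simp at h
  | a :: l, 0, w, h => by
    have : a = w := Option.some.inj h
    subst this; rfl
  | a :: l, n+1, w, h => by
    simp only [List.getElem?_cons_succ] at h
    simp only [List.set, list_set_self l n w h]

theorem replaceAt_self (r : List ℕ) (t : RTree α) {w : RTree α}
    (h : t.subtreeAt r = some w) : t.replaceAt r w = t := by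
  induction r generalizing t with
  | nil =>
    rw [subtreeAt_nil] at h
    rw [replaceAt_nil, Option.some.inj h]
  | cons i r ih =>
    cases t with
    | node a ts =>
      obtain ⟨w0, hg, hi, hsub⟩ := subtreeAt_cons_eq_some h
      simp only [replaceAt_cons, hg]
      rw [ih w0 hsub]
      congr 1
      exact list_set_self ts (i-1) w0 hg

theorem replaceAt_comm (r r' : List ℕ) (hrr' : ¬ r <+: r') (hr'r : ¬ r' <+: r)
    (t x y : RTree α) (h : (t.subtreeAt r).isSome) (h' : (t.subtreeAt r').isSome) :
    (t.replaceAt r x).replaceAt r' y = (t.replaceAt r' y).replaceAt r x := by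
  induction r generalizing r' t with
  | nil => exact absurd List.nil_prefix hrr'
  | cons i r ih =>
    cases r' with
    | nil => exact absurd List.nil_prefix hr'r
    | cons j r' =>
      cases t with
      | node a ts =>
        obtain ⟨w0, hg, hi, he⟩ := subtreeAt_cons_isSome h
        obtain ⟨w0', hg', hj, he'⟩ := subtreeAt_cons_isSome h'
        by_cases hij : i = j
        · subst hij
          have hww : w0' = w0 := by rw [hg] at hg'; exact (Option.some.inj hg').symm
          have he'' : (RTree.node a ts).subtreeAt (i :: r') = w0.subtreeAt r' := by
            rw [he', hww]
          have hr1 : ¬ r <+: r' := fun hc => hrr' (by simpa using hc)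
          have hr2 : ¬ r' <+: r := fun hc => hr'r (by simpa using hc)
          simp only [replaceAt_cons, hg, list_get?_set_eq hg, List.set_set]
          rw [ih r' hr1 hr2 w0 (by rw [he] at h; exact h) (by rw [he''] at h'; exact h')]
        · have hne : i - 1 ≠ j - 1 := by omega
          simp only [replaceAt_cons, hg, hg', List.getElem?_set_ne hne,
            List.getElem?_set_ne hne.symm, List.set_comm _ _ hne]

theorem list_sum_set {ts : List (RTree α)} {k : ℕ} {w : RTree α}
    (h : ts[k]? = some w) (y : RTree α) :
    ((ts.set k y).map size).sum + size w = (ts.map size).sum + size y := by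
  induction ts generalizing k with
  | nil => simp at h
  | cons t ts ih =>
    cases k with
    | zero =>
      have ht : t = w := Option.some.inj h
      subst ht
      simp only [List.set, List.map_cons, List.sum_cons]
      omega
    | succ k =>
      simp only [List.getElem?_cons_succ] at h
      have := ih h
      simp only [List.set, List.map_cons, List.sum_cons]
      omega

theorem size_replaceAt (r : List ℕ) (t x : RTree α) {w : RTree α}
    (h : t.subtreeAt r = some w) :
    size (t.replaceAt r x) + size w = size t + size x := by
  induction r generalizing t with
  | nil =>
    rw [subtreeAt_nil] at h
    rw [replaceAt_nil, Option.some.inj h]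
    omega
  | cons i r ih =>
    cases t with
    | node a ts =>
      obtain ⟨w0, hg, hi, hsub⟩ := subtreeAt_cons_eq_some h
      simp only [replaceAt_cons, hg, size_node]
      have h1 := list_sum_set hg (w0.replaceAt r x)
      have h2 := ih w0 hsub
      omega

theorem size_subtreeAt_le (r : List ℕ) (t : RTree α) {w : RTree α}
    (h : t.subtreeAt r = some w) : size w ≤ size t := by
  induction r generalizing t with
  | nil => rw [subtreeAt_nil] at h; rw [Option.some.inj h]
  | cons i r ih =>
    cases t with
    | node a ts =>
      obtain ⟨w0, hg, hi, hsub⟩ := subtreeAt_cons_eq_some h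
      have h1 : size w ≤ size w0 := ih w0 hsub
      have h2 : w0 ∈ ts := List.mem_of_getElem? hg
      have h3 : size w0 ≤ (ts.map size).sum :=
        List.single_le_sum (fun _ _ => Nat.zero_le _) _ (List.mem_map_of_mem h2)
      rw [size_node]
      omega

theorem size_subtreeAt_lt (r : List ℕ) (t : RTree α) {w : RTree α}
    (h : t.subtreeAt r = some w) (hr : r ≠ []) : size w < size t := by
  cases r with
  | nil => exact absurd rfl hr
  | cons i r =>
    cases t with
    | node a ts =>
      obtain ⟨w0, hg, hi, hsub⟩ := subtreeAt_cons_eq_some h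
      have h1 : size w ≤ size w0 := size_subtreeAt_le r w0 hsub
      have h2 : w0 ∈ ts := List.mem_of_getElem? hg
      have h3 : size w0 ≤ (ts.map size).sum :=
        List.single_le_sum (fun _ _ => Nat.zero_le _) _ (List.mem_map_of_mem h2)
      rw [size_node]
      omega

theorem tmap_node (f : α → β) (a : α) (ts : List (RTree α)) :
    tmap f (RTree.node a ts) = .node (f a) (ts.map (tmap f)) := by
  rw [tmap]
  congr 1
  simp

theorem subtreeAt_tmap (f : α → β) (r : List ℕ) (t : RTree α) :
    (tmap f t).subtreeAt r = (t.subtreeAt r).map (tmap f) := by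
  induction r generalizing t with
  | nil => rw [subtreeAt_nil, subtreeAt_nil]; rfl
  | cons i r ih =>
    cases t with
    | node a ts =>
      rw [tmap_node, subtreeAt_cons, subtreeAt_cons, List.getElem?_map]
      cases hg : ts[i - 1]? with
      | none => simp
      | some w =>
        by_cases hi : 1 ≤ i
        · simp only [Option.map_some, if_pos hi]; exact ih w
        · simp [hi]

theorem replaceAt_tmap (f : α → β) (r : List ℕ) (t x : RTree α) :
    tmap f (t.replaceAt r x) = (tmap f t).replaceAt r (tmap f x) := by
  induction r generalizing t with
  | nil => rw [replaceAt_nil, replaceAt_nil]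
  | cons i r ih =>
    cases t with
    | node a ts =>
      rw [replaceAt_cons, tmap_node, tmap_node, replaceAt_cons, List.getElem?_map, List.map_set]
      cases hg : ts[i - 1]? with
      | none => simp only [hg, Option.map_none, tmap_node, List.map_nil]
      | some w => simp only [hg, Option.map_some]; rw [ih w]

theorem size_tmap (f : α → β) : ∀ t : RTree α, size (tmap f t) = size t
  | .node a ts => by
    rw [tmap_node, size_node, size_node, List.map_map]
    congr 2
    exact List.map_congr_left (fun t ht => size_tmap f t)
decreasing_by
  simp only [RTree.node.sizeOf_spec]
  have := List.sizeOf_lt_of_mem ht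
  omega

end PumpAux


namespace PumpAux
open RTree

variable {S I Sg Δ : Type}

theorem stepL_lift {A : ATT S I Sg Δ} {lab : List ℕ → Option (Option Sg)}
    {w w' t : SForm S I Δ} {r : List ℕ}
    (hst : ATT.StepL A lab w w') (h : t.subtreeAt r = some w) :
    ATT.StepL A lab t (t.replaceAt r w') := by
  obtain ⟨p, γ, v, ξ, hleaf, hside, rfl⟩ := hst
  have hl : w.subtreeAt p = some (RTree.node (Sum.inr (γ, v)) []) := hleaf
  have hleaf' : ATT.IsAttLeaf t (r ++ p) γ v := by
    show t.subtreeAt (r ++ p) = _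
    rw [subtreeAt_append, h, Option.bind_some]
    exact hl
  exact ⟨r ++ p, γ, v, ξ, hleaf', hside, (replaceAt_append r p t _ h).symm⟩

theorem rtg_lift {A : ATT S I Sg Δ} {lab : List ℕ → Option (Option Sg)}
    {w w' : SForm S I Δ}
    (hd : Relation.ReflTransGen (ATT.StepL A lab) w w') (t : SForm S I Δ) (r : List ℕ)
    (h : t.subtreeAt r = some w) :
    Relation.ReflTransGen (ATT.StepL A lab) t (t.replaceAt r w') := by
  induction hd with
  | refl => rw [replaceAt_self r t h]
  | @tail b c hab hbc ih =>
    have hbsome : (t.subtreeAt r).isSome := by rw [h]; rfl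
    have hsub : (t.replaceAt r b).subtreeAt r = some b := subtreeAt_replaceAt r t b hbsome
    have hstep := stepL_lift hbc hsub
    rw [replaceAt_replaceAt r t b c hbsome] at hstep
    exact ih.tail hstep

theorem stepL_main {A : ATT S I Sg Δ} {lab : List ℕ → Option (Option Sg)}
    {t t' : SForm S I Δ}
    (hst : ATT.StepL A lab t t') (r : List ℕ) {w : SForm S I Δ}
    (h : t.subtreeAt r = some w) :
    (t'.subtreeAt r = some w ∧ ∀ X, ATT.StepL A lab (t.replaceAt r X) (t'.replaceAt r X)) ∨
    (∃ w', ATT.StepL A lab w w' ∧ t'.subtreeAt r = some w' ∧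
      ∀ X, t'.replaceAt r X = t.replaceAt r X) := by
  obtain ⟨p, γ, v, ξ, hleaf, hside, rfl⟩ := hst
  have hl : t.subtreeAt p = some (RTree.node (Sum.inr (γ, v)) []) := hleaf
  have hwsome : (t.subtreeAt r).isSome := by rw [h]; rfl
  have hpsome : (t.subtreeAt p).isSome := by rw [hl]; rfl
  by_cases h1 : r <+: p
  · obtain ⟨ρ, rfl⟩ := h1
    right
    have hwρ : w.subtreeAt ρ = some (RTree.node (Sum.inr (γ, v)) []) := by
      rw [subtreeAt_append, h, Option.bind_some] at hl
      exact hl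
    refine ⟨w.replaceAt ρ (ATT.inst v ξ), ⟨ρ, γ, v, ξ, hwρ, hside, rfl⟩, ?_, ?_⟩
    · rw [replaceAt_append r ρ t _ h]
      exact subtreeAt_replaceAt r t _ hwsome
    · intro X
      rw [replaceAt_append r ρ t _ h, replaceAt_replaceAt r t _ X hwsome]
  · by_cases h2 : p <+: r
    · exfalso
      obtain ⟨ρ', rfl⟩ := h2
      cases ρ' with
      | nil => exact h1 (by simp)
      | cons k ρ'' =>
        rw [subtreeAt_append, hl, Option.bind_some, subtreeAt_cons] at h
        simp at h
    · left
      constructor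
      · rw [subtreeAt_replaceAt_of_ne p r h2 h1 t _ hpsome hwsome]
        exact h
      · intro X
        refine ⟨p, γ, v, ξ, ?_, hside, ?_⟩
        · show (t.replaceAt r X).subtreeAt p = _
          rw [subtreeAt_replaceAt_of_ne r p h1 h2 t X hwsome hpsome]
          exact hl
        · exact replaceAt_comm p r h2 h1 t (ATT.inst v ξ) X hpsome hwsome

theorem rtg_proj {A : ATT S I Sg Δ} {lab : List ℕ → Option (Option Sg)}
    {t t' : SForm S I Δ}
    (hd : Relation.ReflTransGen (ATT.StepL A lab) t t') (r : List ℕ) {w : SForm S I Δ}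
    (h : t.subtreeAt r = some w) :
    ∃ w', Relation.ReflTransGen (ATT.StepL A lab) w w' ∧ t'.subtreeAt r = some w' := by
  induction hd with
  | refl => exact ⟨w, .refl, h⟩
  | @tail b c hab hbc ih =>
    obtain ⟨w₁, hw₁, hb⟩ := ih
    rcases stepL_main hbc r hb with ⟨hs, _⟩ | ⟨w₂, hs, hsub, _⟩
    · exact ⟨w₁, hw₁, hs⟩
    · exact ⟨w₂, hw₁.tail hs, hsub⟩

theorem rtg_paste {A : ATT S I Sg Δ} {lab : List ℕ → Option (Option Sg)}
    {t t' : SForm S I Δ}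
    (hd : Relation.ReflTransGen (ATT.StepL A lab) t t') (r : List ℕ) {w : SForm S I Δ}
    (h : t.subtreeAt r = some w) (X : SForm S I Δ) :
    Relation.ReflTransGen (ATT.StepL A lab) (t.replaceAt r X) (t'.replaceAt r X) := by
  induction hd with
  | refl => exact .refl
  | @tail b c hab hbc ih =>
    obtain ⟨w₁, _, hb⟩ := rtg_proj hab r h
    rcases stepL_main hbc r hb with ⟨_, hstep⟩ | ⟨w₂, _, _, heq⟩
    · exact ih.tail (hstep X)
    · rw [heq X]; exact ih

end PumpAux

/-- If a derivation of `A` on input `s` contains a productive cycle — a reachable sentential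
form `t₁` with an attribute occurrence `γ(ν)` at position `p`, such that `t₁` rewrites (only
at positions below `p`) to `t₂ = t₁[p ← u]` with `t₂ ≠ t₁`, `γ(ν)` still occurring in `u`,
and the rewriting strictly grows the tree, and the derivation can be completed to an output
tree — then by pumping `A` produces infinitely many distinct output trees on input `s`;
hence `A` is not functional. -/
theorem productive_cycle_infinite_outputs {S I Sg D : Type}
    (A : ATT S I Sg D) (s : RTree Sg)
    (t₁ : SForm S I D) (p : List ℕ) (γ : S ⊕ I) (ν : List ℕ) (u : SForm S I D)
    (tout : RTree D)
    (hreach : Relation.ReflTransGen (ATT.Step A s) (ATT.initForm A) t₁)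
    (hocc : ATT.IsAttLeaf t₁ p γ ν)
    (hcyc : Relation.ReflTransGen (ATT.Step A s) t₁ (t₁.replaceAt p u))
    (hne : t₁.replaceAt p u ≠ t₁)
    (hocc' : ∃ q, ATT.IsAttLeaf u q γ ν)
    (hgrow : RTree.size t₁ < RTree.size (t₁.replaceAt p u))
    (hcomplete : Relation.ReflTransGen (ATT.Step A s) (t₁.replaceAt p u) (ATT.out tout)) :
    Set.Infinite {t : RTree D | (s, t) ∈ A.trans} ∧ ¬ A.Functional := by
  classical
  obtain ⟨q, hq0⟩ := hocc'
  have hq : u.subtreeAt q = some (RTree.node (Sum.inr (γ, ν)) []) := hq0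
  have hocc1 : t₁.subtreeAt p = some (RTree.node (Sum.inr (γ, ν)) []) := hocc
  have hPsome : (t₁.subtreeAt p).isSome := by rw [hocc1]; rfl
  have ht2p : (t₁.replaceAt p u).subtreeAt p = some u :=
    PumpAux.subtreeAt_replaceAt p t₁ u hPsome
  -- the cycle as a StepL derivation
  have hcycL : Relation.ReflTransGen (ATT.StepL A (ATT.labelHash s)) t₁ (t₁.replaceAt p u) :=
    hcyc
  have hcompleteL : Relation.ReflTransGen (ATT.StepL A (ATT.labelHash s))
      (t₁.replaceAt p u) (ATT.out tout) := hcomplete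
  have hreachL : Relation.ReflTransGen (ATT.StepL A (ATT.labelHash s))
      (ATT.initForm A) t₁ := hreach
  -- attForm ⇒* u
  obtain ⟨u', hau', hu'⟩ := PumpAux.rtg_proj hcycL p hocc1
  have hau : Relation.ReflTransGen (ATT.StepL A (ATT.labelHash s))
      (RTree.node (Sum.inr (γ, ν)) []) u := by
    have huu : u' = u := by
      rw [hu'] at ht2p; exact Option.some.inj ht2p
    exact huu ▸ hau' 
  -- sizes
  have hsz := PumpAux.size_replaceAt p t₁ u hocc1
  have hsa : RTree.size (RTree.node (Sum.inr (γ, ν)) ([] : List (SForm S I D))) = 1 := by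
    rw [PumpAux.size_node]; simp
  have hu2 : 1 < RTree.size u := by omega
  have hqne : q ≠ [] := by
    rintro rfl
    rw [PumpAux.subtreeAt_nil] at hq
    have := Option.some.inj hq
    rw [this, hsa] at hu2
    omega
  -- completion projection at p : u ⇒* out z
  have ht2p' : (t₁.replaceAt p u).subtreeAt p = some u :=
    PumpAux.subtreeAt_replaceAt p t₁ u hPsome
  obtain ⟨w', huw', hw'⟩ := PumpAux.rtg_proj hcompleteL p ht2p'
  have hw'2 : (RTree.tmap Sum.inl tout).subtreeAt p = some w' := hw'
  rw [PumpAux.subtreeAt_tmap] at hw'2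
  cases hz : tout.subtreeAt p with
  | none => rw [hz] at hw'2; simp at hw'2
  | some z =>
  rw [hz] at hw'2
  have hw'z : w' = RTree.tmap Sum.inl z := by
    simpa using hw'2.symm
  rw [hw'z] at huw'
  have huz : Relation.ReflTransGen (ATT.StepL A (ATT.labelHash s)) u (ATT.out z) := huw'
  -- z has a subtree at q
  obtain ⟨y', hay', hzq'⟩ := PumpAux.rtg_proj huz q hq
  have hzq'2 : (RTree.tmap Sum.inl z).subtreeAt q = some y' := hzq'
  rw [PumpAux.subtreeAt_tmap] at hzq'2
  cases hy : z.subtreeAt q with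
  | none => rw [hy] at hzq'2; simp at hzq'2
  | some y =>
  have hylt : RTree.size y < RTree.size z := PumpAux.size_subtreeAt_lt q z hy hqne
  -- pumping sequences
  let qs : ℕ → List ℕ := fun n => Nat.rec q (fun _ acc => acc ++ q) n
  let U : ℕ → SForm S I D := fun n => Nat.rec u (fun m Um => Um.replaceAt (qs m) u) n
  let Z : ℕ → RTree D := fun n => Nat.rec z (fun m Zm => Zm.replaceAt (qs m) z) n
  have key : ∀ n,
      Relation.ReflTransGen (ATT.StepL A (ATT.labelHash s)) u (U n) ∧
      (U n).subtreeAt (qs n) = some (RTree.node (Sum.inr (γ, ν)) []) ∧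
      Relation.ReflTransGen (ATT.StepL A (ATT.labelHash s)) (U n) (ATT.out (Z n)) ∧
      (Z n).subtreeAt (qs n) = some y ∧
      RTree.size (Z n) = RTree.size z + n * (RTree.size z - RTree.size y) := by
    intro n
    induction n with
    | zero =>
      refine ⟨.refl, hq, huz, hy, ?_⟩
      show RTree.size z = RTree.size z + 0 * (RTree.size z - RTree.size y)
      omega
    | succ n ih =>
      obtain ⟨h1, h2, h3, h4, h5⟩ := ih
      have h2some : ((U n).subtreeAt (qs n)).isSome := by rw [h2]; rfl
      have h4some : ((Z n).subtreeAt (qs n)).isSome := by rw [h4]; rfl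
      have hoz : (ATT.out (Z n) : SForm S I D).subtreeAt (qs n) = some (ATT.out y) := by
        show (RTree.tmap Sum.inl (Z n)).subtreeAt (qs n) = _
        rw [PumpAux.subtreeAt_tmap, h4]
        rfl
      have hozsome : ((ATT.out (Z n) : SForm S I D).subtreeAt (qs n)).isSome := by
        rw [hoz]; rfl
      have hqsS : qs (n+1) = qs n ++ q := rfl
      have hUS : U (n+1) = (U n).replaceAt (qs n) u := rfl
      have hZS : Z (n+1) = (Z n).replaceAt (qs n) z := rfl
      refine ⟨?_, ?_, ?_, ?_, ?_⟩
      · exact h1.trans (hUS ▸ PumpAux.rtg_lift hau (U n) (qs n) h2)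
      · rw [hUS, hqsS, PumpAux.subtreeAt_append,
          PumpAux.subtreeAt_replaceAt (qs n) (U n) u h2some, Option.bind_some]
        exact hq
      · have s1 : Relation.ReflTransGen (ATT.StepL A (ATT.labelHash s)) (U (n+1))
            ((ATT.out (Z n)).replaceAt (qs n) u) :=
          hUS ▸ PumpAux.rtg_paste h3 (qs n) h2 u
        have hsub2 : ((ATT.out (Z n) : SForm S I D).replaceAt (qs n) u).subtreeAt (qs n)
            = some u := PumpAux.subtreeAt_replaceAt _ _ _ hozsome
        have s2 := PumpAux.rtg_lift huz _ (qs n) hsub2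
        rw [PumpAux.replaceAt_replaceAt _ _ _ _ hozsome] at s2
        have heq : (ATT.out (Z n) : SForm S I D).replaceAt (qs n) (ATT.out z)
            = ATT.out (Z (n+1)) := by
          rw [hZS]
          show _ = RTree.tmap Sum.inl ((Z n).replaceAt (qs n) z)
          rw [PumpAux.replaceAt_tmap]
          rfl
        exact s1.trans (heq ▸ s2)
      · rw [hZS, hqsS, PumpAux.subtreeAt_append,
          PumpAux.subtreeAt_replaceAt (qs n) (Z n) z h4some, Option.bind_some]
        exact hy
      · have hrep := PumpAux.size_replaceAt (qs n) (Z n) z h4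
        have hmulS : (n+1) * (RTree.size z - RTree.size y)
            = n * (RTree.size z - RTree.size y) + (RTree.size z - RTree.size y) :=
          Nat.succ_mul _ _
        rw [hZS]
        omega
  -- the family of outputs
  let W : ℕ → RTree D := fun n => tout.replaceAt p (Z n)
  have hmem : ∀ n, (s, W n) ∈ A.trans := by
    intro n
    obtain ⟨h1, h2, h3, h4, h5⟩ := key n
    show Relation.ReflTransGen (ATT.Step A s) (ATT.initForm A) (ATT.out (W n))
    have d1 : Relation.ReflTransGen (ATT.StepL A (ATT.labelHash s)) t₁
        (t₁.replaceAt p (U n)) :=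
      PumpAux.rtg_lift (hau.trans h1) t₁ p hocc1
    have hsubU : (t₁.replaceAt p (U n)).subtreeAt p = some (U n) :=
      PumpAux.subtreeAt_replaceAt p t₁ _ hPsome
    have d2 := PumpAux.rtg_lift h3 _ p hsubU
    rw [PumpAux.replaceAt_replaceAt p t₁ _ _ hPsome] at d2
    have d3 := PumpAux.rtg_paste hcompleteL p ht2p (ATT.out (Z n))
    rw [PumpAux.replaceAt_replaceAt p t₁ u _ hPsome] at d3
    have d4 : (ATT.out tout : SForm S I D).replaceAt p (ATT.out (Z n)) = ATT.out (W n) := by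
      show _ = RTree.tmap Sum.inl (tout.replaceAt p (Z n))
      rw [PumpAux.replaceAt_tmap]
      rfl
    exact hreachL.trans (d1.trans (d2.trans (d4 ▸ d3)))
  have hszW : ∀ n, RTree.size (W n) + RTree.size z = RTree.size tout + RTree.size (Z n) :=
    fun n => PumpAux.size_replaceAt p tout (Z n) hz
  have hWinj : Function.Injective W := by
    intro m n hmn
    have hs1 : RTree.size (W m) = RTree.size (W n) := by rw [hmn]
    have hm := hszW m
    have hn := hszW n
    have hzm := (key m).2.2.2.2
    have hzn := (key n).2.2.2.2
    have hmul : m * (RTree.size z - RTree.size y) = n * (RTree.size z - RTree.size y) := by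
      omega
    exact Nat.eq_of_mul_eq_mul_right (by omega) hmul
  refine ⟨Set.infinite_of_injective_forall_mem hWinj hmem, ?_⟩
  intro hf
  have h01 : W 0 = W 1 := hf s (W 0) (W 1) (hmem 0) (hmem 1)
  have h01' : (0 : ℕ) = 1 := hWinj h01
  omega
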